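/- Let a > 0, let h(z) = z on 𝔻 and q(z) = −a·Log(1−z) (principal branch of the logarithm), so that the dilatation ω = q² has unbounded image. Then the harmonic mapping f = h + conj(g) satisfies (1−|z|²)²·Φ_f(z) ≤ 4a(4a+1) for all z ∈ 𝔻; in particular, if t ∈ [0,1] and a ≤ (√(1+8t) − 1)/8, then Φ_f(z) ≤ 2t/(1−|z|²)² for all z ∈ 𝔻. -/

import Mathlib

open Complex Metric ComplexConjugate

noncomputable def schwarzian (F : ℂ → ℂ) (z : ℂ) : ℂ :=
  deriv (fun w => deriv (deriv F) w / deriv F w) z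
    - (1 / 2) * (deriv (deriv F) z / deriv F z) ^ 2

noncomputable def Sharm (h q : ℂ → ℂ) (z : ℂ) : ℂ :=
  schwarzian h z
    + (2 * conj (q z) / (1 + ((‖q z‖ : ℂ)) ^ 2)) *
        (deriv (deriv q) z - deriv q z * (deriv (deriv h) z / deriv h z))
    - 4 * (deriv q z * conj (q z) / (1 + ((‖q z‖ : ℂ)) ^ 2)) ^ 2

noncomputable def PhiHarm (h q : ℂ → ℂ) (z : ℂ) : ℝ :=
  ‖Sharm h q z‖
    + 4 * (‖deriv q z‖) ^ 2 / (1 + (‖q z‖) ^ 2) ^ 2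

lemma hUopen : IsOpen {z : ℂ | 1 - z ∈ Complex.slitPlane} :=
  Complex.isOpen_slitPlane.preimage (by continuity)

lemma ball_slit (z : ℂ) (hz : z ∈ ball (0:ℂ) 1) : 1 - z ∈ Complex.slitPlane := by
  rw [Complex.mem_slitPlane_iff]
  left
  simp [mem_ball, Complex.dist_eq] at hz
  have h : |z.re| < 1 := lt_of_le_of_lt (Complex.abs_re_le_norm z) hz
  simp [Complex.sub_re]
  linarith [(abs_lt.mp h).2]

lemma hq1 (a : ℝ) (z : ℂ) (hz : 1 - z ∈ Complex.slitPlane) :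
    HasDerivAt (fun z : ℂ => -(a:ℂ) * Complex.log (1 - z)) ((a:ℂ) * (1-z)⁻¹) z := by
  have h1 : HasDerivAt (fun z : ℂ => 1 - z) (-1) z := (hasDerivAt_id z).const_sub 1
  have h2 := (Complex.hasDerivAt_log hz).comp z h1
  have := h2.const_mul (-(a:ℂ))
  exact this.congr_deriv (by ring)

lemma derivq (a : ℝ) (z : ℂ) (hz : 1 - z ∈ Complex.slitPlane) :
    deriv (fun z : ℂ => -(a:ℂ) * Complex.log (1 - z)) z = (a:ℂ) * (1-z)⁻¹ :=
  (hq1 a z hz).deriv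

lemma derivq2 (a : ℝ) (z : ℂ) (hz : 1 - z ∈ Complex.slitPlane) :
    deriv (deriv (fun z : ℂ => -(a:ℂ) * Complex.log (1 - z))) z
      = (a:ℂ) * ((1-z)^2)⁻¹ := by
  have hev : deriv (fun z : ℂ => -(a:ℂ) * Complex.log (1 - z))
      =ᶠ[nhds z] fun w => (a:ℂ) * (1-w)⁻¹ := by
    filter_upwards [hUopen.mem_nhds hz] with w hw using derivq a w hw
  rw [hev.deriv_eq]
  have hne : (1 : ℂ) - z ≠ 0 := Complex.slitPlane_ne_zero hz
  have h1 : HasDerivAt (fun w : ℂ => 1 - w) (-1) z := (hasDerivAt_id z).const_sub 1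
  have h2 := (h1.inv hne).const_mul (a:ℂ)
  have h3 : HasDerivAt (fun w : ℂ => (a:ℂ) * (1-w)⁻¹) _ z := h2
  rw [h3.deriv]
  field_simp

lemma key (a : ℝ) (ha : 0 < a) (z : ℂ) (hz : z ∈ ball (0:ℂ) 1) :
    PhiHarm (fun w : ℂ => w) (fun z => -(a : ℂ) * Complex.log (1 - z)) z
      ≤ (a + 4 * a ^ 2) / (‖1 - z‖) ^ 2 := by
  have hslit := ball_slit z hz
  have hne : (1 : ℂ) - z ≠ 0 := Complex.slitPlane_ne_zero hslit
  set q : ℂ → ℂ := fun z => -(a : ℂ) * Complex.log (1 - z) with hqdef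
  set m : ℝ := ‖q z‖ with hm
  set r : ℝ := ‖1 - z‖ with hr
  have hrpos : 0 < r := by simpa [hr] using (norm_pos_iff.mpr hne)
  have hmnn : 0 ≤ m := norm_nonneg _
  have hDpos : (0:ℝ) < 1 + m ^ 2 := by positivity
  have hsch : schwarzian (fun w : ℂ => w) z = 0 := by
    simp [schwarzian, deriv_id'']
  have hd1 : deriv (fun w : ℂ => w) z = 1 := deriv_id z
  have hd2 : deriv (deriv (fun w : ℂ => w)) z = 0 := by
    simp [deriv_id'']
  have hDcast : (1 : ℂ) + ((m:ℂ))^2 = ((1 + m^2 : ℝ) : ℂ) := by push_cast; ring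
  have hDabs : ‖1 + ((m:ℂ))^2‖ = 1 + m^2 := by
    rw [hDcast, Complex.norm_real, Real.norm_eq_abs, abs_of_pos hDpos]
  have hS : Sharm (fun w : ℂ => w) q z
      = (2 * conj (q z) / ((1 + m^2 : ℝ) : ℂ)) * ((a:ℂ) * ((1-z)^2)⁻¹)
        - 4 * (((a:ℂ) * (1-z)⁻¹) * conj (q z) / ((1 + m^2 : ℝ) : ℂ)) ^ 2 := by
    rw [Sharm, hsch, hd1, hd2, derivq a z hslit, derivq2 a z hslit, ← hm, hDcast]
    ring
  have habsS : ‖Sharm (fun w : ℂ => w) q z‖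
      ≤ 2 * m * (a / r^2) / (1 + m^2) + 4 * (a / r * m / (1 + m^2)) ^ 2 := by
    rw [hS]
    refine le_trans (norm_sub_le _ _) ?_
    have e1 : ‖(2 * conj (q z) / ((1 + m^2 : ℝ) : ℂ)) * ((a:ℂ) * ((1-z)^2)⁻¹)‖
        = 2 * m * (a / r^2) / (1 + m^2) := by
      simp [norm_mul, norm_div, norm_pow, Complex.norm_conj, Complex.norm_real,
        abs_of_pos ha, abs_of_pos hDpos, hDabs, ← hm, ← hr]
      ring
    have e2 : ‖4 * (((a:ℂ) * (1-z)⁻¹) * conj (q z) / ((1 + m^2 : ℝ) : ℂ)) ^ 2‖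
        = 4 * (a / r * m / (1 + m^2)) ^ 2 := by
      simp [norm_mul, norm_div, norm_pow, Complex.norm_conj, Complex.norm_real,
        abs_of_pos ha, abs_of_pos hDpos, hDabs, ← hm, ← hr]
      ring
    rw [e1, e2]
  have hq' : ‖deriv q z‖ = a / r := by
    rw [derivq a z hslit]
    simp [norm_mul, norm_inv, Complex.norm_real, abs_of_pos ha, ← hr, div_eq_mul_inv]
  have hPhi : PhiHarm (fun w : ℂ => w) q z
      ≤ 2 * m * (a / r^2) / (1 + m^2) + 4 * (a / r * m / (1 + m^2)) ^ 2
        + 4 * (a / r) ^ 2 / (1 + m^2) ^ 2 := by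
    rw [PhiHarm, hq', ← hm]
    linarith [habsS]
  refine le_trans hPhi ?_
  have expand : 2 * m * (a / r^2) / (1 + m^2) + 4 * (a / r * m / (1 + m^2)) ^ 2
      + 4 * (a / r) ^ 2 / (1 + m^2) ^ 2
      = (2*m*a*(1+m^2) + 4*a^2*m^2 + 4*a^2) / (r^2*(1+m^2)^2) := by
    field_simp
  rw [expand, div_le_div_iff₀ (by positivity) (by positivity)]
  nlinarith [mul_nonneg (mul_nonneg (mul_nonneg ha.le hDpos.le) (sq_nonneg (1-m))) (sq_nonneg r),
    mul_nonneg (mul_nonneg (mul_nonneg (sq_nonneg a) hDpos.le) (sq_nonneg m)) (sq_nonneg r)]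


theorem stmt_4 (a : ℝ) (ha : 0 < a) (g : ℂ → ℂ)
    (hga : AnalyticOnNhd ℂ g (ball 0 1)) (hg0 : g 0 = 0)
    (hg' : ∀ z ∈ ball (0 : ℂ) 1,
      deriv g z = (-(a : ℂ) * Complex.log (1 - z)) ^ 2 * deriv (fun w : ℂ => w) z) :
    (∀ z ∈ ball (0 : ℂ) 1,
      (1 - ‖z‖ ^ 2) ^ 2 *
          PhiHarm (fun w : ℂ => w) (fun z => -(a : ℂ) * Complex.log (1 - z)) z
        ≤ 4 * a * (4 * a + 1)) ∧
    (∀ t ∈ Set.Icc (0 : ℝ) 1, a ≤ (Real.sqrt (1 + 8 * t) - 1) / 8 →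
      ∀ z ∈ ball (0 : ℂ) 1,
        PhiHarm (fun w : ℂ => w) (fun z => -(a : ℂ) * Complex.log (1 - z)) z
          ≤ 2 * t / (1 - ‖z‖ ^ 2) ^ 2) := by
  have part1 : ∀ z ∈ ball (0 : ℂ) 1,
      (1 - ‖z‖ ^ 2) ^ 2 *
          PhiHarm (fun w : ℂ => w) (fun z => -(a : ℂ) * Complex.log (1 - z)) z
        ≤ 4 * a * (4 * a + 1) := by
    intro z hz
    have hk := key a ha z hz
    have hzlt : ‖z‖ < 1 := by simpa [mem_ball, Complex.dist_eq] using hz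
    have hznn : 0 ≤ ‖z‖ := norm_nonneg z
    set r : ℝ := ‖1 - z‖ with hr
    have hrpos : 0 < r := by
      have : (1:ℂ) - z ≠ 0 := Complex.slitPlane_ne_zero (ball_slit z hz)
      simpa [hr] using (norm_pos_iff.mpr this)
    have hle : 1 - ‖z‖ ^ 2 ≤ 2 * r := by
      have h1 : 1 - ‖z‖ ≤ r := by
        have := norm_sub_norm_le (1:ℂ) z
        simpa [hr] using this
      nlinarith
    have hnn : 0 ≤ 1 - ‖z‖ ^ 2 := by nlinarith
    have hsq : (1 - ‖z‖ ^ 2) ^ 2 ≤ 4 * r ^ 2 := by nlinarith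
    have hPhinn : 0 ≤ PhiHarm (fun w : ℂ => w) (fun z => -(a : ℂ) * Complex.log (1 - z)) z := by
      rw [PhiHarm]
      positivity
    calc (1 - ‖z‖ ^ 2) ^ 2 *
          PhiHarm (fun w : ℂ => w) (fun z => -(a : ℂ) * Complex.log (1 - z)) z
        ≤ 4 * r ^ 2 * ((a + 4 * a ^ 2) / r ^ 2) := by
          apply mul_le_mul hsq hk hPhinn (by positivity)
      _ = 4 * (a + 4 * a ^ 2) := by field_simp
      _ = 4 * a * (4 * a + 1) := by ring
  refine ⟨part1, ?_⟩
  intro t ht hat z hz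
  have hzlt : ‖z‖ < 1 := by simpa [mem_ball, Complex.dist_eq] using hz
  have hznn : 0 ≤ ‖z‖ := norm_nonneg z
  have hpos0 : 0 < 1 - ‖z‖ ^ 2 := by nlinarith
  have hpos : 0 < (1 - ‖z‖ ^ 2) ^ 2 := by positivity
  have hb := part1 z hz
  have hs : Real.sqrt (1 + 8 * t) ^ 2 = 1 + 8 * t := Real.sq_sqrt (by linarith [ht.1])
  have hsnn : 0 ≤ Real.sqrt (1 + 8 * t) := Real.sqrt_nonneg _
  have hta : 4 * a * (4 * a + 1) ≤ 2 * t := by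
    nlinarith [mul_nonneg (sub_nonneg.mpr hat)
      (by nlinarith : (0:ℝ) ≤ 16 * ((Real.sqrt (1 + 8 * t) - 1) / 8 + a) + 4)]
  rw [le_div_iff₀ hpos]
  calc PhiHarm (fun w : ℂ => w) (fun z => -(a : ℂ) * Complex.log (1 - z)) z
        * (1 - ‖z‖ ^ 2) ^ 2
      = (1 - ‖z‖ ^ 2) ^ 2 *
          PhiHarm (fun w : ℂ => w) (fun z => -(a : ℂ) * Complex.log (1 - z)) z := by ring
    _ ≤ 4 * a * (4 * a + 1) := hb
    _ ≤ 2 * t := hta
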